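/- Let A be a unital complex Banach algebra, let D, η ∈ A, let d ∈ ℝ be a scalar, and set h := d·1 + η. Then cosh(ηD)·cosh(Dd) + sinh(ηD)·sinh(Dd) = cosh(hD), where cosh(ηD) := Σ_{n≥0} η^{2n}D^{2n}/(2n)!, sinh(ηD) := Σ_{n≥0} η^{2n+1}D^{2n+1}/(2n+1)!, cosh(Dd) := Σ_{n≥0} d^{2n}D^{2n}/(2n)!, sinh(Dd) := Σ_{n≥0} d^{2n+1}D^{2n+1}/(2n+1)!, and cosh(hD) := Σ_{n≥0} h^{2n}D^{2n}/(2n)! (all series converge absolutely). -/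

import Mathlib

open scoped Nat

section Aux

variable {A : Type*} [NormedRing A] [NormedAlgebra ℂ A]

/-- The `n`-th term of the "reverse-ordered" exponential series `E(x) = Σ xⁿDⁿ/n!`. -/
noncomputable def gseries (D x : A) (n : ℕ) : A := ((n ! : ℂ))⁻¹ • (x ^ n * D ^ n)

lemma gseries_summable_norm (D x : A) : Summable fun n => ‖gseries D x n‖ := by
  have hb : Summable fun n : ℕ => (1 + ‖(1 : A)‖) * ((‖x‖ * ‖D‖) ^ n / n !) :=
    (Real.summable_pow_div_factorial _).mul_left _
  refine hb.of_nonneg_of_le (fun n => norm_nonneg _) (fun n => ?_)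
  have h1 : ∀ m : ℕ, ‖gseries D x m‖ = ‖x ^ m * D ^ m‖ / (m ! : ℝ) := by
    intro m
    rw [gseries, norm_smul, norm_inv]
    simp [div_eq_inv_mul]
  match n with
  | 0 =>
      simp only [h1, pow_zero, one_mul, Nat.factorial_zero]
      norm_num
  | (n+1) =>
      rw [h1]
      have h2 : ‖x ^ (n+1) * D ^ (n+1)‖ ≤ (‖x‖ * ‖D‖) ^ (n+1) := by
        calc ‖x ^ (n+1) * D ^ (n+1)‖ ≤ ‖x ^ (n+1)‖ * ‖D ^ (n+1)‖ := norm_mul_le _ _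
          _ ≤ ‖x‖ ^ (n+1) * ‖D‖ ^ (n+1) := by
              exact mul_le_mul (norm_pow_le' x n.succ_pos) (norm_pow_le' D n.succ_pos)
                (norm_nonneg _) (pow_nonneg (norm_nonneg _) _)
          _ = (‖x‖ * ‖D‖) ^ (n+1) := (mul_pow _ _ _).symm
      have h3 : (0:ℝ) < ((n+1)! : ℝ) := by positivity
      have h4 : ‖x ^ (n+1) * D ^ (n+1)‖ / ((n+1)! : ℝ) ≤ (‖x‖ * ‖D‖) ^ (n+1) / ((n+1)! : ℝ) := by
        gcongr
      refine h4.trans ?_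
      refine le_mul_of_one_le_left (by positivity) ?_
      linarith [norm_nonneg (1 : A)]

lemma gseries_summable_norm_even (D x : A) :
    Summable fun n => ‖gseries D x (2 * n)‖ := by
  have := (gseries_summable_norm D x).comp_injective
    (i := fun n : ℕ => 2 * n) (fun a b hab => by simpa using hab)
  simpa [Function.comp_def] using this

lemma gseries_summable_norm_odd (D x : A) :
    Summable fun n => ‖gseries D x (2 * n + 1)‖ := by
  have := (gseries_summable_norm D x).comp_injective
    (i := fun n : ℕ => 2 * n + 1) (fun a b hab => by simpa using hab)
  simpa [Function.comp_def] using this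

variable [CompleteSpace A]

lemma gseries_even_odd (D x : A) :
    (∑' n, gseries D x (2 * n)) + (∑' n, gseries D x (2 * n + 1)) = ∑' n, gseries D x n :=
  tsum_even_add_odd (gseries_summable_norm_even D x).of_norm
    (gseries_summable_norm_odd D x).of_norm

lemma gseries_neg_even (D x : A) (n : ℕ) :
    gseries D (-x) (2 * n) = gseries D x (2 * n) := by
  rw [gseries, gseries, Even.neg_pow (even_two_mul n)]

lemma gseries_neg_odd (D x : A) (n : ℕ) :
    gseries D (-x) (2 * n + 1) = -gseries D x (2 * n + 1) := by
  rw [gseries, gseries, Odd.neg_pow ⟨n, by ring⟩, neg_mul, smul_neg]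

lemma tsum_gseries_neg (D x : A) :
    (∑' n, gseries D (-x) n)
      = (∑' n, gseries D x (2 * n)) - (∑' n, gseries D x (2 * n + 1)) := by
  rw [← gseries_even_odd D (-x), tsum_congr (gseries_neg_even D x),
    tsum_congr (gseries_neg_odd D x), tsum_neg, sub_eq_add_neg]

lemma gseries_scalar (D : A) (s : ℂ) (m : ℕ) :
    gseries D (s • (1 : A)) m = (s ^ m / (m ! : ℂ)) • D ^ m := by
  rw [gseries, smul_pow, one_pow, smul_mul_assoc, one_mul, smul_smul, div_eq_mul_inv,
    mul_comm]

lemma gseries_mul (D x : A) (s : ℂ) :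
    (∑' n, gseries D x n) * (∑' n, gseries D (s • (1 : A)) n)
      = ∑' n, gseries D (s • (1 : A) + x) n := by
  rw [tsum_mul_tsum_eq_tsum_sum_range_of_summable_norm (gseries_summable_norm D x)
    (gseries_summable_norm D (s • (1 : A)))]
  refine tsum_congr fun N => ?_
  have hc : Commute (s • (1 : A)) x := (Commute.one_left x).smul_left s
  rw [gseries, hc.add_pow]
  rw [Finset.sum_mul, Finset.smul_sum]
  rw [← Finset.sum_range_reflect]
  refine Finset.sum_congr rfl fun k hk => ?_
  have hkN : k ≤ N := by simpa [Nat.lt_succ_iff] using hk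
  have hsub : N + 1 - 1 - k = N - k := by omega
  have hsub2 : N - (N - k) = k := by omega
  rw [hsub, gseries, gseries_scalar]
  simp only [hsub2]
  have e1 : (s • (1 : A)) ^ k = s ^ k • (1 : A) := by rw [smul_pow, one_pow]
  have e2 : ((N.choose k : ℕ) : A) = ((N.choose k : ℕ) : ℂ) • (1 : A) := by
    rw [← map_natCast (algebraMap ℂ A), Algebra.algebraMap_eq_smul_one]
  rw [e1, e2]
  simp only [smul_mul_assoc, mul_smul_comm, one_mul, mul_one, smul_smul]
  rw [mul_assoc, ← pow_add, Nat.sub_add_cancel hkN]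
  congr 1
  have hfact : (N.choose k : ℂ) * (k ! : ℂ) * ((N - k)! : ℂ) = (N ! : ℂ) := by
    exact_mod_cast congrArg (Nat.cast : ℕ → ℂ)
      (Nat.choose_mul_factorial_mul_factorial hkN)
  have h1 : (k ! : ℂ) ≠ 0 := Nat.cast_ne_zero.2 (Nat.factorial_ne_zero _)
  have h2 : ((N - k)! : ℂ) ≠ 0 := Nat.cast_ne_zero.2 (Nat.factorial_ne_zero _)
  have h3 : (N ! : ℂ) ≠ 0 := Nat.cast_ne_zero.2 (Nat.factorial_ne_zero _)
  have h4 : (N.choose k : ℂ) ≠ 0 := Nat.cast_ne_zero.2 (Nat.choose_pos hkN).ne'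
  field_simp
  linear_combination (-(s ^ k)) * hfact

end Aux

/-- Constant-depth identity `cosh(ηD)·cosh(Dd) + sinh(ηD)·sinh(Dd) = cosh(hD)`
in a unital complex Banach algebra, with `h = d·1 + η`. -/
theorem stmt_3 (A : Type*) [NormedRing A] [NormedAlgebra ℂ A] [CompleteSpace A]
    (D η : A) (d : ℝ) (h : A) (hdef : h = (d : ℂ) • (1 : A) + η) :
    (Summable fun n : ℕ => ‖(((2 * n)! : ℂ))⁻¹ • (η ^ (2 * n) * D ^ (2 * n))‖) ∧
    (Summable fun n : ℕ => ‖(((2 * n + 1)! : ℂ))⁻¹ • (η ^ (2 * n + 1) * D ^ (2 * n + 1))‖) ∧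
    (Summable fun n : ℕ => ‖((d : ℂ) ^ (2 * n) / ((2 * n)! : ℂ)) • D ^ (2 * n)‖) ∧
    (Summable fun n : ℕ => ‖((d : ℂ) ^ (2 * n + 1) / ((2 * n + 1)! : ℂ)) • D ^ (2 * n + 1)‖) ∧
    (Summable fun n : ℕ => ‖(((2 * n)! : ℂ))⁻¹ • (h ^ (2 * n) * D ^ (2 * n))‖) ∧
    (∑' n : ℕ, (((2 * n)! : ℂ))⁻¹ • (η ^ (2 * n) * D ^ (2 * n))) *
        (∑' n : ℕ, ((d : ℂ) ^ (2 * n) / ((2 * n)! : ℂ)) • D ^ (2 * n)) +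
      (∑' n : ℕ, (((2 * n + 1)! : ℂ))⁻¹ • (η ^ (2 * n + 1) * D ^ (2 * n + 1))) *
        (∑' n : ℕ, ((d : ℂ) ^ (2 * n + 1) / ((2 * n + 1)! : ℂ)) • D ^ (2 * n + 1)) =
      ∑' n : ℕ, (((2 * n)! : ℂ))⁻¹ • (h ^ (2 * n) * D ^ (2 * n)) := by
  refine ⟨gseries_summable_norm_even D η, gseries_summable_norm_odd D η, ?_, ?_,
    gseries_summable_norm_even D h, ?_⟩
  · simp only [← gseries_scalar D (d : ℂ)]
    exact gseries_summable_norm_even D _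
  · simp only [← gseries_scalar D (d : ℂ)]
    exact gseries_summable_norm_odd D _
  · have e3 : ∀ n : ℕ, ((d : ℂ) ^ (2 * n) / ((2 * n)! : ℂ)) • D ^ (2 * n)
        = gseries D ((d : ℂ) • (1 : A)) (2 * n) := fun n => (gseries_scalar D _ _).symm
    have e4 : ∀ n : ℕ, ((d : ℂ) ^ (2 * n + 1) / ((2 * n + 1)! : ℂ)) • D ^ (2 * n + 1)
        = gseries D ((d : ℂ) • (1 : A)) (2 * n + 1) := fun n => (gseries_scalar D _ _).symm
    rw [tsum_congr e3, tsum_congr e4]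
    show (∑' n, gseries D η (2 * n)) * (∑' n, gseries D ((d : ℂ) • (1 : A)) (2 * n)) +
        (∑' n, gseries D η (2 * n + 1)) * (∑' n, gseries D ((d : ℂ) • (1 : A)) (2 * n + 1))
        = ∑' n, gseries D h (2 * n)
    set Cη := ∑' n, gseries D η (2 * n) with hCη
    set Sη := ∑' n, gseries D η (2 * n + 1) with hSη
    set Cd := ∑' n, gseries D ((d : ℂ) • (1 : A)) (2 * n) with hCd
    set Sd := ∑' n, gseries D ((d : ℂ) • (1 : A)) (2 * n + 1) with hSd
    set Ch := ∑' n, gseries D h (2 * n) with hCh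
    have hE1 : (Cη + Sη) * (Cd + Sd) = ∑' n, gseries D h n := by
      rw [hCη, hSη, hCd, hSd, gseries_even_odd, gseries_even_odd, gseries_mul D η (d : ℂ),
        ← hdef]
    have hE2 : (Cη - Sη) * (Cd - Sd) = ∑' n, gseries D (-h) n := by
      rw [hCη, hSη, hCd, hSd, ← tsum_gseries_neg D η, ← tsum_gseries_neg D ((d : ℂ) • (1 : A)),
        ← neg_smul, gseries_mul D (-η) (-(d : ℂ))]
      refine tsum_congr fun n => ?_
      congr 1
      rw [hdef, neg_add, neg_smul]
    have hEh : (∑' n, gseries D h n) + (∑' n, gseries D (-h) n) = Ch + Ch := by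
      rw [← gseries_even_odd D h, tsum_gseries_neg D h, hCh]
      abel
    have hkey : (Cη * Cd + Sη * Sd) + (Cη * Cd + Sη * Sd) = Ch + Ch := by
      have expand : (Cη + Sη) * (Cd + Sd) + (Cη - Sη) * (Cd - Sd)
          = (Cη * Cd + Sη * Sd) + (Cη * Cd + Sη * Sd) := by noncomm_ring
      rw [← hEh, ← hE1, ← hE2, expand]
    have h2 : (2 : ℂ) • (Cη * Cd + Sη * Sd) = (2 : ℂ) • Ch := by
      rw [two_smul, two_smul]; exact hkey
    have h3 := congrArg (fun z => (2 : ℂ)⁻¹ • z) h2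
    simpa [smul_smul] using h3
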